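/- There exist a real constant c > 0 and an integer K such that for every integer k ≥ K there is a finite graph G_k whose edge set admits a partition into locally k-irregular parts, while every partition of E(G_k) into locally k-irregular parts has at least c·k² parts; that is, h(k) = Ω(k²). -/

import Mathlib

open SimpleGraph

variable {V : Type*}

/-- The degree of a vertex `v` in an edge part `E`: the number of edges of `E` incident to `v`. -/
noncomputable def partDeg (E : Set (Sym2 V)) (v : V) : ℕ :=
  {e ∈ E | v ∈ e}.ncard

/-- A part is a matching if no two of its edges share a vertex. -/
def IsMatchingPart (E : Set (Sym2 V)) : Prop :=
  ∀ e ∈ E, ∀ f ∈ E, e ≠ f → ∀ v : V, v ∈ e → v ∉ f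

/-- A part is locally irregular if the endpoints of each of its edges have distinct degrees. -/
def IsLocallyIrregularPart (E : Set (Sym2 V)) : Prop :=
  ∀ u v : V, s(u, v) ∈ E → partDeg E u ≠ partDeg E v

/-- A part is locally regular if the endpoints of each of its edges have equal degrees. -/
def IsLocallyRegularPart (E : Set (Sym2 V)) : Prop :=
  ∀ u v : V, s(u, v) ∈ E → partDeg E u = partDeg E v

/-- A part is regular if all vertices incident to one of its edges have the same degree `r ≥ 1`. -/
def IsRegularPart (E : Set (Sym2 V)) : Prop :=
  ∃ r : ℕ, 1 ≤ r ∧ ∀ v : V, (∃ e ∈ E, v ∈ e) → partDeg E v = r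

/-- A part is `r`-regular if every vertex incident to one of its edges has degree `r` in it. -/
def IsRegularPartOfDeg (r : ℕ) (E : Set (Sym2 V)) : Prop :=
  ∀ v : V, (∃ e ∈ E, v ∈ e) → partDeg E v = r

/-- A part is locally `k`-irregular if endpoint degrees of each edge differ by at least `k`. -/
def IsLocallyKIrregularPart (k : ℕ) (E : Set (Sym2 V)) : Prop :=
  ∀ u v : V, s(u, v) ∈ E → (k : ℤ) ≤ |(partDeg E u : ℤ) - (partDeg E v : ℤ)|

/-- The maximum degree of a finite graph. -/
noncomputable def maxDeg [Fintype V] (G : SimpleGraph V) : ℕ :=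
  Finset.univ.sup fun v => partDeg G.edgeSet v

/-! ### Auxiliary generic lemmas -/

section Generic

variable {α β : Type*}

lemma partDeg_mono [Finite α] {E F : Set (Sym2 α)} (h : E ⊆ F) (v : α) :
    partDeg E v ≤ partDeg F v :=
  Set.ncard_le_ncard (fun e he => ⟨h he.1, he.2⟩) (Set.toFinite _)

lemma partDeg_edgeSet_eq (G : SimpleGraph α) (v : α) :
    partDeg G.edgeSet v = (G.neighborSet v).ncard := by
  have himg : {e ∈ G.edgeSet | v ∈ e} = (fun w => s(v, w)) '' G.neighborSet v := by
    ext e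
    constructor
    · rintro ⟨he, hv⟩
      induction e with
      | _ a b =>
        rcases Sym2.mem_iff.1 hv with rfl | rfl
        · exact ⟨b, he, rfl⟩
        · exact ⟨a, G.adj_symm he, Sym2.eq_swap⟩
    · rintro ⟨w, hw, rfl⟩
      exact ⟨hw, Sym2.mem_mk_left _ _⟩
  rw [partDeg, himg, Set.ncard_image_of_injective]
  intro a b hab
  exact Sym2.congr_right.1 hab

lemma partDeg_le_degree [Finite α] {G : SimpleGraph α} {E : Set (Sym2 α)}
    (hE : E ⊆ G.edgeSet) (v : α) : partDeg E v ≤ (G.neighborSet v).ncard := by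
  rw [← partDeg_edgeSet_eq]
  exact partDeg_mono hE v

lemma one_le_partDeg [Finite α] {E : Set (Sym2 α)} {v : α} {e : Sym2 α}
    (he : e ∈ E) (hv : v ∈ e) : 1 ≤ partDeg E v :=
  (Set.ncard_pos (Set.toFinite _)).2 ⟨e, he, hv⟩

lemma two_le_partDeg [Finite α] {E : Set (Sym2 α)} {v : α} {e f : Sym2 α}
    (he : e ∈ E) (hve : v ∈ e) (hf : f ∈ E) (hvf : v ∈ f) (hef : e ≠ f) :
    2 ≤ partDeg E v := by
  have : 1 < partDeg E v :=
    (Set.one_lt_ncard (Set.toFinite _)).2 ⟨e, ⟨he, hve⟩, f, ⟨hf, hvf⟩, hef⟩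
  omega

/-- `partDeg` of the incidence set of `v` at `v` itself is the full degree of `v`. -/
lemma partDeg_incidenceSet_self (G : SimpleGraph α) (v : α) :
    partDeg (G.incidenceSet v) v = partDeg G.edgeSet v := by
  unfold partDeg
  congr 1
  ext e
  constructor
  · rintro ⟨⟨he, _⟩, hv⟩
    exact ⟨he, hv⟩
  · rintro ⟨he, hv⟩
    exact ⟨⟨he, hv⟩, hv⟩

/-- The edges of the incidence set of `c` containing an adjacent vertex `x ≠ c` form
a singleton. -/
lemma partDeg_incidenceSet_other (G : SimpleGraph α) {c x : α} (h : G.Adj c x) :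
    partDeg (G.incidenceSet c) x = 1 := by
  have hxc : x ≠ c := fun hh => G.irrefl (hh ▸ h)
  have hset : {e ∈ G.incidenceSet c | x ∈ e} = {s(c, x)} := by
    ext e
    constructor
    · rintro ⟨⟨he, hc⟩, hx⟩
      exact Set.mem_singleton_iff.2 ((Sym2.mem_and_mem_iff (Ne.symm hxc)).1 ⟨hc, hx⟩)
    · rintro rfl
      exact ⟨⟨G.mem_edgeSet.2 h, Sym2.mem_mk_left _ _⟩, Sym2.mem_mk_right _ _⟩
  rw [partDeg, hset, Set.ncard_singleton]

/-- If a part contained in the edge set reaches the full degree at `v`, then it contains all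
edges at `v`. -/
lemma incidenceSet_subset_part [Finite α] {G : SimpleGraph α} {E : Set (Sym2 α)}
    (hE : E ⊆ G.edgeSet) {v : α} (hdeg : partDeg G.edgeSet v ≤ partDeg E v) :
    G.incidenceSet v ⊆ E := by
  have hsub : {e ∈ E | v ∈ e} ⊆ {e ∈ G.edgeSet | v ∈ e} := fun e he => ⟨hE he.1, he.2⟩
  have := Set.eq_of_subset_of_ncard_le hsub hdeg (Set.toFinite _)
  intro e he
  have : e ∈ {e ∈ E | v ∈ e} := this ▸ (⟨he.1, he.2⟩ : e ∈ {e ∈ G.edgeSet | v ∈ e})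
  exact this.1

/-- Transport of `partDeg` along an equivalence. -/
lemma partDeg_map (e : α ≃ β) (E : Set (Sym2 α)) (v : α) :
    partDeg (Sym2.map e '' E) (e v) = partDeg E v := by
  have hinj : Function.Injective (Sym2.map (e : α → β)) := Sym2.map.injective e.injective
  have hset : {f ∈ Sym2.map e '' E | e v ∈ f} = Sym2.map e '' {f ∈ E | v ∈ f} := by
    ext f
    constructor
    · rintro ⟨⟨g, hg, rfl⟩, hv⟩
      refine ⟨g, ⟨hg, ?_⟩, rfl⟩
      rcases Sym2.mem_map.1 hv with ⟨a, ha, hav⟩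
      rwa [e.injective hav] at ha
    · rintro ⟨g, ⟨hg, hv⟩, rfl⟩
      exact ⟨⟨g, hg, rfl⟩, Sym2.mem_map.2 ⟨v, hv, rfl⟩⟩
  rw [partDeg, hset, Set.ncard_image_of_injective _ hinj, partDeg]

/-- The edge set of the pullback of a graph along the inverse of an equivalence. -/
lemma edgeSet_comap (e : α ≃ β) (G : SimpleGraph α) :
    (G.comap (e.symm : β → α)).edgeSet = Sym2.map e '' G.edgeSet := by
  ext f
  induction f with
  | _ x y =>
    simp only [mem_edgeSet, comap_adj]
    constructor
    · intro h
      refine ⟨s(e.symm x, e.symm y), G.mem_edgeSet.2 h, ?_⟩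
      simp [Sym2.map_pair_eq]
    · rintro ⟨g, hg, hmap⟩
      induction g with
      | _ a b =>
        rw [Sym2.map_pair_eq, Sym2.eq_iff] at hmap
        rcases hmap with ⟨rfl, rfl⟩ | ⟨rfl, rfl⟩
        · simpa using hg
        · simpa using G.adj_symm hg

end Generic

/-! ### The construction -/

namespace Stmt15

variable (k : ℕ)

/-- Half of `k`. -/
def rr : ℕ := k / 2

/-- Number of points/lines: `rr k ^ 2`. -/
def mm : ℕ := rr k * rr k

/-- The base set `B ⊆ ZMod (mm k)`, satisfying `B - B = ZMod (mm k)`. -/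
def BB : Finset (ZMod (mm k)) :=
  ((Finset.range (rr k)).image fun i => ((i : ℕ) : ZMod (mm k))) ∪
    ((Finset.range (rr k)).image fun i => ((i * rr k : ℕ) : ZMod (mm k)))

/-- Number of leaves attached to each line. -/
def lam : ℕ := k + 1 - (BB k).card

/-- The vertex type: points ⊕ lines ⊕ leaves. -/
abbrev Vx := ZMod (mm k) ⊕ (ZMod (mm k) ⊕ ZMod (mm k) × Fin (lam k))

/-- Point vertex. -/
def pt (p : ZMod (mm k)) : Vx k := Sum.inl p

/-- Line vertex. -/
def ln (t : ZMod (mm k)) : Vx k := Sum.inr (Sum.inl t)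

/-- Leaf vertex. -/
def lf (t : ZMod (mm k)) (j : Fin (lam k)) : Vx k := Sum.inr (Sum.inr (t, j))

/-- The graph. -/
def G : SimpleGraph (Vx k) where
  Adj v w :=
    (∃ p t, v = pt k p ∧ w = ln k t ∧ p - t ∈ BB k) ∨
    (∃ p t, w = pt k p ∧ v = ln k t ∧ p - t ∈ BB k) ∨
    (∃ t j, v = ln k t ∧ w = lf k t j) ∨
    (∃ t j, w = ln k t ∧ v = lf k t j)
  symm := by
    refine ⟨?_⟩
    rintro v w (h | h | h | h)
    · exact Or.inr (Or.inl h)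
    · exact Or.inl h
    · exact Or.inr (Or.inr (Or.inr h))
    · exact Or.inr (Or.inr (Or.inl h))
  loopless := by
    refine ⟨?_⟩
    intro v h
    rcases h with ⟨p, t, h1, h2, _⟩ | ⟨p, t, h1, h2, _⟩ | ⟨t, j, h1, h2⟩ | ⟨t, j, h1, h2⟩ <;>
      rw [h1] at h2 <;> simp [pt, ln, lf] at h2

lemma adj_def (v w : Vx k) : (G k).Adj v w ↔
    ((∃ p t, v = pt k p ∧ w = ln k t ∧ p - t ∈ BB k) ∨
    (∃ p t, w = pt k p ∧ v = ln k t ∧ p - t ∈ BB k) ∨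
    (∃ t j, v = ln k t ∧ w = lf k t j) ∨
    (∃ t j, w = ln k t ∧ v = lf k t j)) := Iff.rfl

lemma adj_pt_ln {p t : ZMod (mm k)} : (G k).Adj (pt k p) (ln k t) ↔ p - t ∈ BB k := by
  rw [adj_def]
  simp [pt, ln, lf]

lemma adj_ln_lf {t t' : ZMod (mm k)} {j : Fin (lam k)} :
    (G k).Adj (ln k t) (lf k t' j) ↔ t = t' := by
  rw [adj_def]
  simp [pt, ln, lf, eq_comm]

lemma not_adj_ln_ln {t t' : ZMod (mm k)} : ¬ (G k).Adj (ln k t) (ln k t') := by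
  rw [adj_def]
  simp [pt, ln, lf]


/-! ### Basic parameters -/

lemma rr_ge (hk : 16 ≤ k) : 8 ≤ rr k := by unfold rr; omega

lemma two_rr_le (hk : 16 ≤ k) : 2 * rr k ≤ k := by unfold rr; omega

lemma mm_pos (hk : 16 ≤ k) : 0 < mm k := by
  have := rr_ge k hk
  unfold mm
  nlinarith

lemma card_BB_le : (BB k).card ≤ 2 * rr k := by
  refine (Finset.card_union_le _ _).trans ?_
  have h1 := Finset.card_image_le (s := Finset.range (rr k))
    (f := fun i => ((i : ℕ) : ZMod (mm k)))
  have h2 := Finset.card_image_le (s := Finset.range (rr k))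
    (f := fun i => ((i * rr k : ℕ) : ZMod (mm k)))
  simp only [Finset.card_range] at h1 h2
  omega

lemma card_BB_le_k (hk : 16 ≤ k) : (BB k).card ≤ k :=
  (card_BB_le k).trans (two_rr_le k hk)

lemma lam_pos (hk : 16 ≤ k) : 0 < lam k := by
  have := card_BB_le_k k hk
  unfold lam
  omega

lemma card_BB_add_lam (hk : 16 ≤ k) : (BB k).card + lam k = k + 1 := by
  have := card_BB_le_k k hk
  unfold lam
  omega

lemma mem_BB_cast {i : ℕ} (hi : i < rr k) : ((i : ℕ) : ZMod (mm k)) ∈ BB k :=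
  Finset.mem_union_left _ (Finset.mem_image.2 ⟨i, Finset.mem_range.2 hi, rfl⟩)

lemma mem_BB_mul {i : ℕ} (hi : i < rr k) : ((i * rr k : ℕ) : ZMod (mm k)) ∈ BB k :=
  Finset.mem_union_right _ (Finset.mem_image.2 ⟨i, Finset.mem_range.2 hi, rfl⟩)

/-- The crucial difference property: every element of `ZMod (mm k)` is a difference of two
elements of `BB k`. -/
lemma exists_diff (hk : 16 ≤ k) (x : ZMod (mm k)) :
    ∃ b₁ ∈ BB k, ∃ b₂ ∈ BB k, b₁ - b₂ = x := by
  haveI : NeZero (mm k) := ⟨(mm_pos k hk).ne'⟩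
  have hrr : 0 < rr k := by have := rr_ge k hk; omega
  set v : ℕ := x.val with hv
  have hvlt : v < mm k := ZMod.val_lt x
  have hcast : ((v : ℕ) : ZMod (mm k)) = x := ZMod.natCast_rightInverse x
  set q : ℕ := v / rr k with hq
  set s : ℕ := v % rr k with hs
  have hqlt : q < rr k := by
    rw [hq]
    rw [Nat.div_lt_iff_lt_mul hrr]
    exact hvlt
  have hdm : rr k * q + s = v := Nat.div_add_mod v (rr k)
  have hslt : s < rr k := Nat.mod_lt _ hrr
  rcases Nat.eq_zero_or_pos s with hs0 | hs1
  · refine ⟨((q * rr k : ℕ) : ZMod (mm k)), mem_BB_mul k hqlt,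
      ((0 : ℕ) : ZMod (mm k)), mem_BB_cast k hrr, ?_⟩
    have : q * rr k = v := by rw [mul_comm]; omega
    rw [this]
    simp [hcast]
  · refine ⟨(((q + 1) * rr k : ℕ) : ZMod (mm k)), ?_,
      ((rr k - s : ℕ) : ZMod (mm k)), mem_BB_cast k (by omega), ?_⟩
    · rcases Nat.lt_or_ge (q + 1) (rr k) with hlt | hge
      · exact mem_BB_mul k hlt
      · have hq1 : q + 1 = rr k := by omega
        have : ((q + 1) * rr k : ℕ) = (mm k : ℕ) := by rw [hq1]; rfl
        rw [this, ZMod.natCast_self]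
        have h0 : ((0 : ℕ) : ZMod (mm k)) ∈ BB k := mem_BB_cast k hrr
        simpa using h0
    · have hexp0 : (q + 1) * rr k = rr k * q + rr k := by ring
      have hle : rr k - s ≤ (q + 1) * rr k := by omega
      rw [← Nat.cast_sub hle]
      have harith : (q + 1) * rr k - (rr k - s) = v := by
        have hexp : (q + 1) * rr k = rr k * q + rr k := by ring
        omega
      rw [harith, hcast]

/-! ### Vertex injectivity and neighborhoods -/

lemma pt_inj : Function.Injective (pt k) := fun a b h => by simpa [pt] using h

lemma ln_inj : Function.Injective (ln k) := fun a b h => by simpa [ln] using h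

lemma lf_inj (t : ZMod (mm k)) : Function.Injective (lf k t) := fun a b h => by
  simpa [lf] using h

lemma neighborSet_pt (p : ZMod (mm k)) :
    (G k).neighborSet (pt k p) = ln k '' ((fun b => p - b) '' ↑(BB k)) := by
  have hset : {t : ZMod (mm k) | p - t ∈ BB k} = (fun b => p - b) '' ↑(BB k) := by
    ext t
    constructor
    · intro ht
      exact ⟨p - t, ht, sub_sub_cancel p t⟩
    · rintro ⟨b, hb, rfl⟩
      simpa [sub_sub_cancel] using hb
  rw [← hset]
  ext w
  simp only [mem_neighborSet, adj_def k, Set.mem_image, Set.mem_setOf_eq]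
  constructor
  · rintro (⟨p', t', h1, rfl, h3⟩ | ⟨p', t', rfl, h2, h3⟩ | ⟨t', j, h1, rfl⟩ | ⟨t', j, h2, h1⟩)
    · obtain rfl : p = p' := by simpa [pt] using h1
      exact ⟨t', h3, rfl⟩
    · exact absurd h2 (by simp [pt, ln])
    · exact absurd h1 (by simp [pt, ln])
    · exact absurd h1 (by simp [pt, lf])
  · rintro ⟨t, ht, rfl⟩
    exact Or.inl ⟨p, t, rfl, rfl, ht⟩

lemma neighborSet_ln (t : ZMod (mm k)) :
    (G k).neighborSet (ln k t) =
      (pt k '' ((fun b => b + t) '' ↑(BB k))) ∪ (lf k t '' Set.univ) := by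
  have hset : {p : ZMod (mm k) | p - t ∈ BB k} = (fun b => b + t) '' ↑(BB k) := by
    ext p
    constructor
    · intro hp
      exact ⟨p - t, hp, sub_add_cancel p t⟩
    · rintro ⟨b, hb, rfl⟩
      simpa [add_sub_cancel_right] using hb
  rw [← hset]
  ext w
  simp only [mem_neighborSet, adj_def k, Set.mem_image, Set.mem_setOf_eq, Set.mem_union]
  constructor
  · rintro (⟨p', t', h1, h2, h3⟩ | ⟨p', t', rfl, h2, h3⟩ | ⟨t', j, h1, rfl⟩ | ⟨t', j, h2, h1⟩)
    · exact absurd h1 (by simp [pt, ln])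
    · obtain rfl : t = t' := by simpa [ln] using h2
      exact Or.inl ⟨p', h3, rfl⟩
    · obtain rfl : t = t' := by simpa [ln] using h1
      exact Or.inr ⟨j, trivial, rfl⟩
    · exact absurd h1 (by simp [ln, lf])
  · rintro (⟨p, hp, rfl⟩ | ⟨j, -, rfl⟩)
    · exact Or.inr (Or.inl ⟨p, t, rfl, rfl, hp⟩)
    · exact Or.inr (Or.inr (Or.inl ⟨t, j, rfl, rfl⟩))

lemma neighborSet_lf (t : ZMod (mm k)) (j : Fin (lam k)) :
    (G k).neighborSet (lf k t j) = {ln k t} := by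
  ext w
  simp only [mem_neighborSet, adj_def k, Set.mem_singleton_iff]
  constructor
  · rintro (⟨p', t', h1, h2, h3⟩ | ⟨p', t', h2, h1, h3⟩ | ⟨t', j', h1, h2⟩ | ⟨t', j', h2, h1⟩)
    · exact absurd h1 (by simp [pt, lf])
    · exact absurd h1 (by simp [ln, lf])
    · exact absurd h1 (by simp [ln, lf])
    · obtain ⟨rfl, rfl⟩ : t = t' ∧ j = j' := by simpa [lf] using h1
      exact h2
  · rintro rfl
    exact Or.inr (Or.inr (Or.inr ⟨t, j, rfl, rfl⟩))


/-! ### Degrees -/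

lemma deg_pt (p : ZMod (mm k)) : partDeg (G k).edgeSet (pt k p) = (BB k).card := by
  have hsub_inj : Function.Injective (fun b : ZMod (mm k) => p - b) := by
    intro a b h
    have : p - (p - a) = p - (p - b) := by simp only at h; rw [h]
    simpa [sub_sub_cancel] using this
  rw [partDeg_edgeSet_eq, neighborSet_pt, Set.ncard_image_of_injective _ (ln_inj k),
    Set.ncard_image_of_injective _ hsub_inj, Set.ncard_coe_finset]

lemma deg_ln (hk : 16 ≤ k) (t : ZMod (mm k)) :
    partDeg (G k).edgeSet (ln k t) = k + 1 := by
  haveI : NeZero (mm k) := ⟨(mm_pos k hk).ne'⟩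
  have hadd_inj : Function.Injective (fun b : ZMod (mm k) => b + t) := by
    intro a b h
    simpa using congrArg (fun y => y - t) h
  have hdisj : Disjoint (pt k '' ((fun b => b + t) '' ↑(BB k))) (lf k t '' Set.univ) := by
    rw [Set.disjoint_left]
    rintro x ⟨a, -, rfl⟩ ⟨b, -, h⟩
    simp [pt, lf] at h
  rw [partDeg_edgeSet_eq, neighborSet_ln,
    Set.ncard_union_eq hdisj (Set.toFinite _) (Set.toFinite _),
    Set.ncard_image_of_injective _ (pt_inj k), Set.ncard_image_of_injective _ hadd_inj,
    Set.ncard_coe_finset, Set.ncard_image_of_injective _ (lf_inj k t)]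
  rw [Set.ncard_univ, Nat.card_eq_fintype_card, Fintype.card_fin]
  exact card_BB_add_lam k hk

lemma deg_lf (t : ZMod (mm k)) (j : Fin (lam k)) :
    partDeg (G k).edgeSet (lf k t j) = 1 := by
  rw [partDeg_edgeSet_eq, neighborSet_lf, Set.ncard_singleton]

/-! ### The decomposition into `mm k` locally `k`-irregular parts -/

lemma exists_decomposition (hk : 16 ≤ k) :
    ∃ P : Fin (mm k) → Set (Sym2 (Vx k)),
      (⋃ i, P i) = (G k).edgeSet ∧
      (∀ i j, i ≠ j → Disjoint (P i) (P j)) ∧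
      (∀ i, IsLocallyKIrregularPart k (P i)) := by
  haveI : NeZero (mm k) := ⟨(mm_pos k hk).ne'⟩
  have hcard : Fintype.card (Fin (mm k)) = Fintype.card (ZMod (mm k)) := by
    simp [ZMod.card]
  let ev : Fin (mm k) ≃ ZMod (mm k) := Fintype.equivOfCardEq hcard
  refine ⟨fun i => (G k).incidenceSet (ln k (ev i)), ?_, ?_, ?_⟩
  · apply Set.Subset.antisymm
    · exact Set.iUnion_subset fun i => (G k).incidenceSet_subset _
    · intro e
      induction e with
      | _ u v =>
        intro he
        have hadj : (G k).Adj u v := (G k).mem_edgeSet.1 he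
        rcases (adj_def k u v).1 hadj with ⟨p, t, rfl, rfl, h3⟩ | ⟨p, t, rfl, rfl, h3⟩ |
          ⟨t, j, rfl, rfl⟩ | ⟨t, j, rfl, rfl⟩
        · refine Set.mem_iUnion.2 ⟨ev.symm t, ?_⟩
          rw [Equiv.apply_symm_apply]
          exact ⟨he, Sym2.mem_mk_right _ _⟩
        · refine Set.mem_iUnion.2 ⟨ev.symm t, ?_⟩
          rw [Equiv.apply_symm_apply]
          exact ⟨he, Sym2.mem_mk_left _ _⟩
        · refine Set.mem_iUnion.2 ⟨ev.symm t, ?_⟩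
          rw [Equiv.apply_symm_apply]
          exact ⟨he, Sym2.mem_mk_left _ _⟩
        · refine Set.mem_iUnion.2 ⟨ev.symm t, ?_⟩
          rw [Equiv.apply_symm_apply]
          exact ⟨he, Sym2.mem_mk_right _ _⟩
  · intro i j hij
    rw [Set.disjoint_left]
    intro e hei hej
    have hne : ln k (ev i) ≠ ln k (ev j) := by
      intro h
      exact hij (ev.injective (ln_inj k h))
    have hsing := (G k).incidenceSet_inter_incidenceSet_subset hne ⟨hei, hej⟩
    rw [Set.mem_singleton_iff] at hsing
    have he : e ∈ (G k).edgeSet := (G k).incidenceSet_subset _ hei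
    rw [hsing] at he
    exact not_adj_ln_ln k ((G k).mem_edgeSet.1 he)
  · intro i u v huv
    obtain ⟨hadj, hco⟩ := (G k).mk'_mem_incidenceSet_iff.1 huv
    have hdegc : partDeg ((G k).incidenceSet (ln k (ev i))) (ln k (ev i)) = k + 1 := by
      rw [partDeg_incidenceSet_self, deg_ln k hk]
    rcases hco with rfl | rfl
    · have hv : partDeg ((G k).incidenceSet (ln k (ev i))) v = 1 :=
        partDeg_incidenceSet_other _ hadj
      rw [hdegc, hv]
      push_cast
      rw [show ((k : ℤ) + 1 - 1) = (k : ℤ) by ring, abs_of_nonneg (by positivity)]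
    · have hv : partDeg ((G k).incidenceSet (ln k (ev i))) u = 1 :=
        partDeg_incidenceSet_other _ ((G k).adj_symm hadj)
      rw [hdegc, hv]
      push_cast
      rw [show ((1 : ℤ) - (k + 1)) = -(k : ℤ) by ring, abs_neg, abs_of_nonneg (by positivity)]

/-! ### The lower bound: every decomposition has at least `mm k` parts -/

lemma lower_bound (hk : 16 ≤ k) {t : ℕ} (P : Fin t → Set (Sym2 (Vx k)))
    (hU : (⋃ i, P i) = (G k).edgeSet)
    (hI : ∀ i, IsLocallyKIrregularPart k (P i)) :
    mm k ≤ t := by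
  haveI : NeZero (mm k) := ⟨(mm_pos k hk).ne'⟩
  have hsub : ∀ i, P i ⊆ (G k).edgeSet := fun i => by
    rw [← hU]; exact Set.subset_iUnion P i
  have hlam : 0 < lam k := lam_pos k hk
  set j0 : Fin (lam k) := ⟨0, hlam⟩
  have hex : ∀ t' : ZMod (mm k), ∃ i, s(ln k t', lf k t' j0) ∈ P i := by
    intro t'
    have hmem : s(ln k t', lf k t' j0) ∈ (G k).edgeSet :=
      (G k).mem_edgeSet.2 ((adj_ln_lf k).2 rfl)
    rw [← hU] at hmem
    exact Set.mem_iUnion.1 hmem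
  choose f hf using hex
  have hstar : ∀ t' : ZMod (mm k), (G k).incidenceSet (ln k t') ⊆ P (f t') ∧
      partDeg (P (f t')) (ln k t') = k + 1 := by
    intro t'
    have hlf1 : partDeg (P (f t')) (lf k t' j0) = 1 := by
      have hub : partDeg (P (f t')) (lf k t' j0) ≤ 1 := by
        have h := partDeg_mono (hsub (f t')) (lf k t' j0)
        rwa [deg_lf] at h
      have hlb : 1 ≤ partDeg (P (f t')) (lf k t' j0) :=
        one_le_partDeg (hf t') (Sym2.mem_mk_right _ _)
      omega
    have hirr := hI (f t') (ln k t') (lf k t' j0) (hf t')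
    rw [hlf1] at hirr
    push_cast at hirr
    have hub : partDeg (P (f t')) (ln k t') ≤ k + 1 := by
      have h := partDeg_mono (hsub (f t')) (ln k t')
      rwa [deg_ln k hk] at h
    have hdeg : partDeg (P (f t')) (ln k t') = k + 1 := by
      rcases abs_cases ((partDeg (P (f t')) (ln k t') : ℤ) - 1) with ⟨heq, -⟩ | ⟨heq, -⟩ <;>
        omega
    exact ⟨incidenceSet_subset_part (hsub (f t')) (by rw [hdeg, deg_ln k hk]), hdeg⟩
  have hinj : Function.Injective f := by
    intro t1 t2 h12
    by_contra hne
    obtain ⟨b₁, hb₁, b₂, hb₂, hdiff⟩ := exists_diff k hk (t1 - t2)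
    have hpt1 : b₁ + t2 - t1 = b₂ := by
      have h' : b₁ + t2 - t1 = b₁ - (t1 - t2) := by ring
      rw [h', ← hdiff, sub_sub_cancel]
    have hpt2 : b₁ + t2 - t2 = b₁ := by ring
    have he1 : s(ln k t1, pt k (b₁ + t2)) ∈ P (f t1) :=
      (hstar t1).1 ⟨(G k).mem_edgeSet.2
        ((G k).adj_symm ((adj_pt_ln k).2 (by rw [hpt1]; exact hb₂))), Sym2.mem_mk_left _ _⟩
    have he2 : s(ln k t2, pt k (b₁ + t2)) ∈ P (f t2) :=
      (hstar t2).1 ⟨(G k).mem_edgeSet.2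
        ((G k).adj_symm ((adj_pt_ln k).2 (by rw [hpt2]; exact hb₁))), Sym2.mem_mk_left _ _⟩
    rw [h12] at he1
    have hne' : s(ln k t1, pt k (b₁ + t2)) ≠ s(ln k t2, pt k (b₁ + t2)) := by
      intro h
      rcases Sym2.eq_iff.1 h with ⟨h1, -⟩ | ⟨h1, -⟩
      · exact hne (ln_inj k h1)
      · exact absurd h1 (by simp [pt, ln])
    have h2le : 2 ≤ partDeg (P (f t2)) (pt k (b₁ + t2)) :=
      two_le_partDeg he1 (Sym2.mem_mk_right _ _) he2 (Sym2.mem_mk_right _ _) hne'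
    have hle : partDeg (P (f t2)) (pt k (b₁ + t2)) ≤ k := by
      have h := partDeg_mono (hsub (f t2)) (pt k (b₁ + t2))
      rw [deg_pt] at h
      exact h.trans (card_BB_le_k k hk)
    have hirr := hI (f t2) (ln k t2) (pt k (b₁ + t2)) he2
    rw [(hstar t2).2] at hirr
    push_cast at hirr
    rcases abs_cases ((k : ℤ) + 1 - (partDeg (P (f t2)) (pt k (b₁ + t2)) : ℤ)) with
      ⟨heq, -⟩ | ⟨heq, -⟩ <;> omega
  calc mm k = Fintype.card (ZMod (mm k)) := (ZMod.card _).symm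
    _ ≤ Fintype.card (Fin t) := Fintype.card_le_of_injective f hinj
    _ = t := Fintype.card_fin t

end Stmt15


/-! ### Transport along an equivalence and final assembly -/

section Transport

variable {α β : Type*}

lemma sym2_comp_eq_id (e : α ≃ β) :
    (Sym2.map (e.symm : β → α)) ∘ (Sym2.map (e : α → β)) = id := by
  funext z
  rw [Function.comp_apply, Sym2.map_map]
  have hcomp : ((e.symm : β → α) ∘ (e : α → β)) = id := funext e.symm_apply_apply
  rw [hcomp, Sym2.map_id, id_eq]

lemma sym2_map_symm_image (e : α ≃ β) (S : Set (Sym2 α)) :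
    Sym2.map e.symm '' (Sym2.map e '' S) = S := by
  rw [← Set.image_comp, sym2_comp_eq_id, Set.image_id]

lemma irregular_map {k : ℕ} (e : α ≃ β) {E : Set (Sym2 α)}
    (h : IsLocallyKIrregularPart k E) :
    IsLocallyKIrregularPart k (Sym2.map e '' E) := by
  intro u v huv
  obtain ⟨g, hg, hmap⟩ := huv
  have hgeq : g = s(e.symm u, e.symm v) := by
    have h1 : Sym2.map e.symm (Sym2.map e g) = Sym2.map e.symm s(u, v) := by rw [hmap]
    rw [← Function.comp_apply (f := Sym2.map (e.symm : β → α)), sym2_comp_eq_id, id_eq] at h1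
    rw [h1, Sym2.map_pair_eq]
  rw [hgeq] at hg
  have hdu : partDeg (Sym2.map e '' E) u = partDeg E (e.symm u) := by
    have h2 := partDeg_map e E (e.symm u)
    rwa [e.apply_symm_apply] at h2
  have hdv : partDeg (Sym2.map e '' E) v = partDeg E (e.symm v) := by
    have h2 := partDeg_map e E (e.symm v)
    rwa [e.apply_symm_apply] at h2
  rw [hdu, hdv]
  exact h _ _ hg

end Transport

/-- h(k) = Ω(k²): there are c > 0 and K such that for every k ≥ K some finite
graph is decomposable into locally k-irregular parts while every such decomposition of it has
at least c·k² parts. -/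
theorem stmt_15 :
    ∃ c : ℝ, 0 < c ∧ ∃ K : ℕ, ∀ k : ℕ, K ≤ k →
      ∃ (n : ℕ) (G : SimpleGraph (Fin n)),
        (∃ (t : ℕ) (P : Fin t → Set (Sym2 (Fin n))),
          (⋃ i, P i) = G.edgeSet ∧
          (∀ i j, i ≠ j → Disjoint (P i) (P j)) ∧
          ∀ i, IsLocallyKIrregularPart k (P i)) ∧
        ∀ (t : ℕ) (P : Fin t → Set (Sym2 (Fin n))),
          (⋃ i, P i) = G.edgeSet →
          (∀ i j, i ≠ j → Disjoint (P i) (P j)) →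
          (∀ i, IsLocallyKIrregularPart k (P i)) →
          c * (k : ℝ) ^ 2 ≤ (t : ℝ) := by
  refine ⟨1 / 16, by norm_num, 16, fun k hk => ?_⟩
  haveI : NeZero (Stmt15.mm k) := ⟨(Stmt15.mm_pos k hk).ne'⟩
  refine ⟨Fintype.card (Stmt15.Vx k), ?_⟩
  set n := Fintype.card (Stmt15.Vx k) with hn
  let ev : Stmt15.Vx k ≃ Fin n := Fintype.equivFin _
  refine ⟨(Stmt15.G k).comap (ev.symm : Fin n → Stmt15.Vx k), ?_, ?_⟩
  · -- upper bound: transport the decomposition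
    obtain ⟨P, hU, hD, hI⟩ := Stmt15.exists_decomposition k hk
    refine ⟨Stmt15.mm k, fun i => Sym2.map ev '' P i, ?_, ?_, ?_⟩
    · rw [← Set.image_iUnion, hU, edgeSet_comap]
    · intro i j hij
      exact (Set.disjoint_image_iff (Sym2.map.injective ev.injective)).2 (hD i j hij)
    · intro i
      exact irregular_map ev (hI i)
  · -- lower bound
    intro t Q hU hD hI
    have hU' : (⋃ i, Sym2.map ev.symm '' Q i) = (Stmt15.G k).edgeSet := by
      rw [← Set.image_iUnion, hU, edgeSet_comap, sym2_map_symm_image]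
    have hI' : ∀ i, IsLocallyKIrregularPart k (Sym2.map ev.symm '' Q i) := fun i =>
      irregular_map ev.symm (hI i)
    have hmmle : Stmt15.mm k ≤ t := Stmt15.lower_bound k hk _ hU' hI'
    have harith : k * k ≤ 16 * Stmt15.mm k := by
      have h1 : k ≤ 2 * Stmt15.rr k + 1 := by unfold Stmt15.rr; omega
      have h2 : 8 ≤ Stmt15.rr k := Stmt15.rr_ge k hk
      unfold Stmt15.mm
      nlinarith
    have hkk : k * k ≤ 16 * t := harith.trans (by omega)
    have hre : ((k * k : ℕ) : ℝ) ≤ ((16 * t : ℕ) : ℝ) := Nat.cast_le.2 hkk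
    push_cast at hre
    nlinarith [hre]
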